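/- Define a 4-dimensional superalgebra over ℂ with even basis {e_1, e_2} and odd basis {f_1, f_2}, and nonzero products: e_1·e_1 = e_1, e_2·e_2 = e_2, e_1·f_i = (1/2) f_i, e_2·f_i = (1/2) f_i for i = 1,2, and f_1·f_2 = e_1 + t e_2 = -f_2·f_1 for a parameter t ∈ ℂ. Then for every t this is a Jordan superalgebra (satisfies the graded Jordan identity). -/

import Mathlib

noncomputable section

/-- The sign `(-1)^a` for a parity `a : ZMod 2`, as a complex number. -/
def sgn (a : ZMod 2) : ℂ := if a = 0 then 1 else -1

/-- Parities of the basis vectors. -/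
def par : Fin 4 → ZMod 2 := ![0, 0, 1, 1]

/-- The homogeneous component of parity `a`: the span of the basis vectors of parity `a`. -/
def Vgrade (a : ZMod 2) : Submodule ℂ (Fin 4 → ℂ) :=
  Submodule.span ℂ {v | ∃ i : Fin 4, par i = a ∧ v = Pi.single i 1}

/-- Multiplication of the family 𝒥₁₆ᵗ: `eᵢ² = eᵢ`, `eᵢ·fⱼ = (1/2)fⱼ`, `f₁·f₂ = e₁ + t·e₂` (basis `e₁, e₂, f₁, f₂`). -/
def jmul (t : ℂ) (x y : Fin 4 → ℂ) : Fin 4 → ℂ :=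
  ![x 0 * y 0 + (x 2 * y 3 - x 3 * y 2),
    x 1 * y 1 + t * (x 2 * y 3 - x 3 * y 2),
    (1 / 2) * (x 0 * y 2 + x 2 * y 0 + x 1 * y 2 + x 2 * y 1),
    (1 / 2) * (x 0 * y 3 + x 3 * y 0 + x 1 * y 3 + x 3 * y 1)]

lemma mem_vgrade_iff (a : ZMod 2) (x : Fin 4 → ℂ) :
    x ∈ Vgrade a ↔ ∀ i, par i ≠ a → x i = 0 := by
  constructor
  · intro hx
    induction hx using Submodule.span_induction with
    | mem v hv =>
      obtain ⟨j, hj, rfl⟩ := hv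
      intro i hi
      rw [Pi.single_apply]
      simp only [ite_eq_right_iff]
      rintro rfl; exact absurd hj hi
    | zero => intro i _; rfl
    | add u v _ _ hu hv => intro i hi; simp [hu i hi, hv i hi]
    | smul c u _ hu => intro i hi; simp [hu i hi]
  · intro h
    have key : ∀ i : Fin 4, par i = a ∨ x i = 0 → x i • (Pi.single i 1 : Fin 4 → ℂ) ∈ Vgrade a := by
      rintro i (hp | hz)
      · exact Submodule.smul_mem _ _ (Submodule.subset_span ⟨i, hp, rfl⟩)
      · rw [hz, zero_smul]; exact zero_mem _
    have hx : x = x 0 • (Pi.single 0 1 : Fin 4 → ℂ) + x 1 • (Pi.single 1 1 : Fin 4 → ℂ)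
        + x 2 • (Pi.single 2 1 : Fin 4 → ℂ) + x 3 • (Pi.single 3 1 : Fin 4 → ℂ) := by
      funext i; fin_cases i <;> simp [Pi.single_apply]
    rw [hx]
    have ha : ∀ i : Fin 4, par i = a ∨ x i = 0 := by
      intro i; by_cases hp : par i = a
      · exact Or.inl hp
      · exact Or.inr (h i hp)
    exact add_mem (add_mem (add_mem (key 0 (ha 0)) (key 1 (ha 1))) (key 2 (ha 2))) (key 3 (ha 3))

lemma jmul0 (t : ℂ) (x y : Fin 4 → ℂ) : jmul t x y 0 = x 0 * y 0 + (x 2 * y 3 - x 3 * y 2) := rfl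
lemma jmul1 (t : ℂ) (x y : Fin 4 → ℂ) : jmul t x y 1 = x 1 * y 1 + t * (x 2 * y 3 - x 3 * y 2) := rfl
lemma jmul2 (t : ℂ) (x y : Fin 4 → ℂ) :
    jmul t x y 2 = (1 / 2) * (x 0 * y 2 + x 2 * y 0 + x 1 * y 2 + x 2 * y 1) := rfl
lemma jmul3 (t : ℂ) (x y : Fin 4 → ℂ) :
    jmul t x y 3 = (1 / 2) * (x 0 * y 3 + x 3 * y 0 + x 1 * y 3 + x 3 * y 1) := rfl

lemma mk0 (h : 0 < 4) : (⟨0, h⟩ : Fin 4) = 0 := rfl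
lemma mk1 (h : 1 < 4) : (⟨1, h⟩ : Fin 4) = 1 := rfl
lemma mk2 (h : 2 < 4) : (⟨2, h⟩ : Fin 4) = 2 := rfl
lemma mk3 (h : 3 < 4) : (⟨3, h⟩ : Fin 4) = 3 := rfl

set_option maxHeartbeats 4000000 in
theorem J16t_is_jordan_superalgebra (t : ℂ) :
    (∀ a b : ZMod 2, ∀ x ∈ Vgrade a, ∀ y ∈ Vgrade b, jmul t x y ∈ Vgrade (a + b)) ∧
    (∀ a b : ZMod 2, ∀ x ∈ Vgrade a, ∀ y ∈ Vgrade b,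
      jmul t x y = sgn (a * b) • jmul t y x) ∧
    (∀ a b c d : ZMod 2, ∀ x ∈ Vgrade a, ∀ y ∈ Vgrade b, ∀ z ∈ Vgrade c, ∀ w ∈ Vgrade d,
      jmul t (jmul t (jmul t x y) z) w
        + sgn (b * c + b * d + c * d) • jmul t (jmul t (jmul t x w) z) y
        + sgn (a * b + a * c + a * d + c * d) • jmul t (jmul t (jmul t y w) z) x
      = jmul t (jmul t x y) (jmul t z w)
        + sgn (d * (b + c)) • jmul t (jmul t x w) (jmul t y z)
        + sgn (b * c) • jmul t (jmul t x z) (jmul t y w)) := by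
  refine ⟨?_, ?_, ?_⟩
  · intro a b x hx y hy
    rw [mem_vgrade_iff] at hx hy ⊢
    fin_cases a <;> fin_cases b <;>
    · first
      | (have hxA : x 2 = 0 := hx 2 (by exact @of_decide_eq_true _ (@instDecidableNot _ (ZMod.decidableEq 2 _ _)) rfl); have hxB : x 3 = 0 := hx 3 (by exact @of_decide_eq_true _ (@instDecidableNot _ (ZMod.decidableEq 2 _ _)) rfl))
      | (have hxA : x 0 = 0 := hx 0 (by exact @of_decide_eq_true _ (@instDecidableNot _ (ZMod.decidableEq 2 _ _)) rfl); have hxB : x 1 = 0 := hx 1 (by exact @of_decide_eq_true _ (@instDecidableNot _ (ZMod.decidableEq 2 _ _)) rfl))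
      first
      | (have hyA : y 2 = 0 := hy 2 (by exact @of_decide_eq_true _ (@instDecidableNot _ (ZMod.decidableEq 2 _ _)) rfl); have hyB : y 3 = 0 := hy 3 (by exact @of_decide_eq_true _ (@instDecidableNot _ (ZMod.decidableEq 2 _ _)) rfl))
      | (have hyA : y 0 = 0 := hy 0 (by exact @of_decide_eq_true _ (@instDecidableNot _ (ZMod.decidableEq 2 _ _)) rfl); have hyB : y 1 = 0 := hy 1 (by exact @of_decide_eq_true _ (@instDecidableNot _ (ZMod.decidableEq 2 _ _)) rfl))
      intro i hi
      fin_cases i <;>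
        first
        | exact absurd (by exact @of_decide_eq_true _ (ZMod.decidableEq 2 _ _) rfl) hi
        | (simp only [mk0, mk1, mk2, mk3, jmul0, jmul1, jmul2, jmul3, hxA, hxB, hyA, hyB]
           ring)
  · intro a b x hx y hy
    rw [mem_vgrade_iff] at hx hy
    fin_cases a <;> fin_cases b <;>
    · first
      | (have hxA : x 2 = 0 := hx 2 (by exact @of_decide_eq_true _ (@instDecidableNot _ (ZMod.decidableEq 2 _ _)) rfl); have hxB : x 3 = 0 := hx 3 (by exact @of_decide_eq_true _ (@instDecidableNot _ (ZMod.decidableEq 2 _ _)) rfl))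
      | (have hxA : x 0 = 0 := hx 0 (by exact @of_decide_eq_true _ (@instDecidableNot _ (ZMod.decidableEq 2 _ _)) rfl); have hxB : x 1 = 0 := hx 1 (by exact @of_decide_eq_true _ (@instDecidableNot _ (ZMod.decidableEq 2 _ _)) rfl))
      first
      | (have hyA : y 2 = 0 := hy 2 (by exact @of_decide_eq_true _ (@instDecidableNot _ (ZMod.decidableEq 2 _ _)) rfl); have hyB : y 3 = 0 := hy 3 (by exact @of_decide_eq_true _ (@instDecidableNot _ (ZMod.decidableEq 2 _ _)) rfl))
      | (have hyA : y 0 = 0 := hy 0 (by exact @of_decide_eq_true _ (@instDecidableNot _ (ZMod.decidableEq 2 _ _)) rfl); have hyB : y 1 = 0 := hy 1 (by exact @of_decide_eq_true _ (@instDecidableNot _ (ZMod.decidableEq 2 _ _)) rfl))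
      simp (config := { decide := true }) only [sgn, if_true, if_false]
      funext i
      fin_cases i <;>
        (simp only [mk0, mk1, mk2, mk3, Pi.smul_apply, smul_eq_mul,
           jmul0, jmul1, jmul2, jmul3, hxA, hxB, hyA, hyB]
         ring)
  · intro a b c d x hx y hy z hz w hw
    rw [mem_vgrade_iff] at hx hy hz hw
    fin_cases a <;> fin_cases b <;> fin_cases c <;> fin_cases d <;>
    · first
      | (have hxA : x 2 = 0 := hx 2 (by exact @of_decide_eq_true _ (@instDecidableNot _ (ZMod.decidableEq 2 _ _)) rfl); have hxB : x 3 = 0 := hx 3 (by exact @of_decide_eq_true _ (@instDecidableNot _ (ZMod.decidableEq 2 _ _)) rfl))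
      | (have hxA : x 0 = 0 := hx 0 (by exact @of_decide_eq_true _ (@instDecidableNot _ (ZMod.decidableEq 2 _ _)) rfl); have hxB : x 1 = 0 := hx 1 (by exact @of_decide_eq_true _ (@instDecidableNot _ (ZMod.decidableEq 2 _ _)) rfl))
      first
      | (have hyA : y 2 = 0 := hy 2 (by exact @of_decide_eq_true _ (@instDecidableNot _ (ZMod.decidableEq 2 _ _)) rfl); have hyB : y 3 = 0 := hy 3 (by exact @of_decide_eq_true _ (@instDecidableNot _ (ZMod.decidableEq 2 _ _)) rfl))
      | (have hyA : y 0 = 0 := hy 0 (by exact @of_decide_eq_true _ (@instDecidableNot _ (ZMod.decidableEq 2 _ _)) rfl); have hyB : y 1 = 0 := hy 1 (by exact @of_decide_eq_true _ (@instDecidableNot _ (ZMod.decidableEq 2 _ _)) rfl))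
      first
      | (have hzA : z 2 = 0 := hz 2 (by exact @of_decide_eq_true _ (@instDecidableNot _ (ZMod.decidableEq 2 _ _)) rfl); have hzB : z 3 = 0 := hz 3 (by exact @of_decide_eq_true _ (@instDecidableNot _ (ZMod.decidableEq 2 _ _)) rfl))
      | (have hzA : z 0 = 0 := hz 0 (by exact @of_decide_eq_true _ (@instDecidableNot _ (ZMod.decidableEq 2 _ _)) rfl); have hzB : z 1 = 0 := hz 1 (by exact @of_decide_eq_true _ (@instDecidableNot _ (ZMod.decidableEq 2 _ _)) rfl))
      first
      | (have hwA : w 2 = 0 := hw 2 (by exact @of_decide_eq_true _ (@instDecidableNot _ (ZMod.decidableEq 2 _ _)) rfl); have hwB : w 3 = 0 := hw 3 (by exact @of_decide_eq_true _ (@instDecidableNot _ (ZMod.decidableEq 2 _ _)) rfl))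
      | (have hwA : w 0 = 0 := hw 0 (by exact @of_decide_eq_true _ (@instDecidableNot _ (ZMod.decidableEq 2 _ _)) rfl); have hwB : w 1 = 0 := hw 1 (by exact @of_decide_eq_true _ (@instDecidableNot _ (ZMod.decidableEq 2 _ _)) rfl))
      simp (config := { decide := true }) only [sgn, if_true, if_false]
      funext i
      fin_cases i <;>
        (simp only [mk0, mk1, mk2, mk3, Pi.add_apply, Pi.smul_apply, smul_eq_mul,
           jmul0, jmul1, jmul2, jmul3, hxA, hxB, hyA, hyB, hzA, hzB, hwA, hwB]
         ring)
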